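/- Ladder exit probabilities at odd heights (Example 4.7): for every integer r ≥ 0, Σ_{n=0}^∞ C(2(n+r)+1, n) / 3^{2(n+r)+2} = 1/(φ^{4r+2}·√5), where φ = (1+√5)/2 is the golden ratio. (The left side equals Σ_{n=0}^∞ C(2n+1, n−r)/3^{2(n+1)} with the convention that C(2n+1, n−r) = 0 for n < r; it is the probability p(2r+1) = p(−2r−1) that the nearest-neighbor random walk on the ladder {0,1}×ℤ started at (0,0) exits through the point (1, 2r+1).) -/

import Mathlib

open Real

noncomputable def T (k : ℕ) : ℝ := ∑' n : ℕ, ((2 * n + k).choose n : ℝ) / 9 ^ n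

lemma choose_le_two_pow' (m i : ℕ) : m.choose i ≤ 2 ^ m := by
  rcases le_or_gt i m with h | h
  · calc m.choose i ≤ ∑ j ∈ Finset.range (m+1), m.choose j :=
        Finset.single_le_sum (fun j _ => Nat.zero_le _) (Finset.mem_range.mpr (by omega))
      _ = 2 ^ m := Nat.sum_range_choose m
  · simp [Nat.choose_eq_zero_of_lt h]

lemma term_nonneg (k n : ℕ) : 0 ≤ ((2 * n + k).choose n : ℝ) / 9 ^ n := by positivity

lemma term_le (k n : ℕ) : ((2 * n + k).choose n : ℝ) / 9 ^ n ≤ 2 ^ k * (4 / 9) ^ n := by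
  have h : ((2 * n + k).choose n : ℝ) ≤ 2 ^ (2 * n + k) := by
    exact_mod_cast Nat.cast_le.mpr (choose_le_two_pow' (2 * n + k) n)
  rw [div_le_iff₀ (by positivity)]
  calc ((2 * n + k).choose n : ℝ) ≤ 2 ^ (2 * n + k) := h
    _ = 2 ^ k * (4 / 9) ^ n * 9 ^ n := by
        rw [pow_add, pow_mul, div_pow]
        field_simp
        ring

lemma summable_T (k : ℕ) : Summable (fun n : ℕ => ((2 * n + k).choose n : ℝ) / 9 ^ n) := by
  apply Summable.of_nonneg_of_le (term_nonneg k) (term_le k)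
  exact (summable_geometric_of_lt_one (by norm_num) (by norm_num)).mul_left _

lemma T_le (k : ℕ) : T k ≤ 2 ^ k * (9 / 5) := by
  have h9 : ∑' n : ℕ, (2:ℝ) ^ k * (4 / 9) ^ n = 2 ^ k * (9 / 5) := by
    rw [tsum_mul_left, tsum_geometric_of_lt_one (by norm_num) (by norm_num)]
    norm_num
  calc T k ≤ ∑' n : ℕ, (2:ℝ) ^ k * (4 / 9) ^ n :=
      Summable.tsum_le_tsum (term_le k) (summable_T k)
        ((summable_geometric_of_lt_one (by norm_num) (by norm_num)).mul_left _)
    _ = _ := h9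

lemma T_nonneg (k : ℕ) : 0 ≤ T k := tsum_nonneg (term_nonneg k)

-- Pascal: T (k+1) = T k + T (k+2) / 9
lemma T_pascal (k : ℕ) : T (k + 1) = T k + T (k + 2) / 9 := by
  have h1 : T (k + 1) = ((k+1).choose 0 : ℝ) / 9 ^ 0 +
      ∑' n : ℕ, ((2 * (n+1) + (k+1)).choose (n+1) : ℝ) / 9 ^ (n+1) := by
    rw [T, Summable.tsum_eq_zero_add (summable_T (k+1))]
    norm_num
  have h2 : ∀ n : ℕ, ((2 * (n+1) + (k+1)).choose (n+1) : ℝ) / 9 ^ (n+1)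
      = ((2 * n + (k+2)).choose n : ℝ) / 9 ^ n / 9
        + ((2 * (n+1) + k).choose (n+1) : ℝ) / 9 ^ (n+1) := by
    intro n
    have : (2 * (n+1) + (k+1)).choose (n+1)
        = (2 * n + (k+2)).choose n + (2 * (n+1) + k).choose (n+1) := by
      have e1 : 2 * (n+1) + (k+1) = (2 * n + k + 2) + 1 := by ring
      have e2 : 2 * (n+1) + k = 2 * n + k + 2 := by ring
      have e3 : 2 * n + (k+2) = 2 * n + k + 2 := by ring
      rw [e1, e2, e3, Nat.choose_succ_succ']
    rw [this]
    push_cast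
    ring
  have hs1 : Summable (fun n : ℕ => ((2 * n + (k+2)).choose n : ℝ) / 9 ^ n / 9) :=
    (summable_T (k+2)).div_const 9
  have hs2 : Summable (fun n : ℕ => ((2 * (n+1) + k).choose (n+1) : ℝ) / 9 ^ (n+1)) := by
    have := (summable_T k).comp_injective (add_left_injective 1)
    exact ((summable_T k).comp_injective (fun a b h => by simpa using h : Function.Injective (· + 1)))
  rw [h1]
  rw [tsum_congr h2, Summable.tsum_add hs1 hs2]
  have h3 : ∑' n : ℕ, ((2 * n + (k+2)).choose n : ℝ) / 9 ^ n / 9 = T (k+2) / 9 := by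
    rw [T, ← tsum_div_const]
  have h4 : ((k+1).choose 0 : ℝ) / 9 ^ 0 + ∑' n : ℕ, ((2 * (n+1) + k).choose (n+1) : ℝ) / 9 ^ (n+1) = T k := by
    rw [T, Summable.tsum_eq_zero_add (summable_T k)]
    norm_num
  rw [h3]
  linarith [h4]

-- central: 2 * T 1 = 9 * (T 0 - 1)
lemma T_central : 2 * T 1 = 9 * (T 0 - 1) := by
  have key : ∀ n : ℕ, 2 * ((2 * n + 1).choose n) = (2 * (n+1) + 0).choose (n+1) := by
    intro n
    have e0 : 2 * (n+1) + 0 = (2*n+1) + 1 := by ring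
    rw [e0, Nat.choose_succ_succ']
    have h2 : (2*n+1).choose (n+1) = (2*n+1).choose n := by
      rw [← Nat.choose_symm (by omega)]
      congr 1
      omega
    omega
  have h1 : 2 * T 1 = ∑' n : ℕ, ((2 * (n+1) + 0).choose (n+1) : ℝ) / 9 ^ n := by
    rw [T, ← tsum_mul_left]
    apply tsum_congr
    intro n
    rw [← key n]
    push_cast
    ring
  have h2 : ∑' n : ℕ, ((2 * (n+1) + 0).choose (n+1) : ℝ) / 9 ^ n
      = 9 * ∑' n : ℕ, ((2 * (n+1) + 0).choose (n+1) : ℝ) / 9 ^ (n+1) := by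
    rw [← tsum_mul_left]
    apply tsum_congr
    intro n
    rw [pow_succ]
    ring
  have h3 : T 0 = (((2:ℕ) * 0 + 0).choose 0 : ℝ) / 9 ^ 0 + ∑' n : ℕ, ((2 * (n+1) + 0).choose (n+1) : ℝ) / 9 ^ (n+1) := by
    rw [T]
    exact Summable.tsum_eq_zero_add (summable_T 0)
  have h4 : (((2:ℕ) * 0 + 0).choose 0 : ℝ) / 9 ^ 0 = 1 := by norm_num
  rw [h1, h2]
  linarith

noncomputable def aa : ℝ := (9 - 3 * Real.sqrt 5) / 2
noncomputable def bb : ℝ := (9 + 3 * Real.sqrt 5) / 2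

lemma sqrt5_sq : Real.sqrt 5 ^ 2 = 5 := Real.sq_sqrt (by norm_num)
lemma sqrt5_lt : Real.sqrt 5 < 3 := by
  nlinarith [sqrt5_sq, Real.sqrt_nonneg 5]
lemma sqrt5_gt : 2 < Real.sqrt 5 := by
  nlinarith [sqrt5_sq, Real.sqrt_nonneg 5]

lemma aa_nonneg : 0 ≤ aa := by unfold aa; nlinarith [sqrt5_lt]
lemma aa_le_two : aa ≤ 2 := by unfold aa; nlinarith [sqrt5_gt]
lemma bb_gt_two : 2 < bb := by unfold bb; nlinarith [sqrt5_gt]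
lemma aa_mul_bb : aa * bb = 9 := by unfold aa bb; nlinarith [sqrt5_sq]
lemma aa_add_bb : aa + bb = 9 := by unfold aa bb; ring

lemma T_rec (k : ℕ) : T (k + 2) = 9 * T (k + 1) - 9 * T k := by
  have := T_pascal k
  linarith

noncomputable def D (k : ℕ) : ℝ := T (k + 1) - aa * T k

lemma D_rec (k : ℕ) : D (k + 1) = bb * D k := by
  unfold D
  rw [T_rec]
  linear_combination (-(T (k+1))) * aa_add_bb + (T k) * aa_mul_bb

lemma D_eq (k : ℕ) : D k = D 0 * bb ^ k := by
  induction k with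
  | zero => simp
  | succ n ih => rw [D_rec, ih, pow_succ]; ring

lemma D_bound (k : ℕ) : |D k| ≤ 8 * 2 ^ k := by
  unfold D
  have h1 := T_le (k + 1)
  have h2 := T_le k
  have h3 := T_nonneg (k + 1)
  have h4 := T_nonneg k
  have h5 : (2:ℝ) ^ (k+1) = 2 * 2 ^ k := by rw [pow_succ]; ring
  rw [abs_le]
  constructor
  · have : aa * T k ≤ 2 * (2 ^ k * (9/5)) :=
      mul_le_mul aa_le_two h2 h4 (by norm_num)
    nlinarith
  · have : 0 ≤ aa * T k := mul_nonneg aa_nonneg h4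
    nlinarith

lemma D_zero : D 0 = 0 := by
  have hb : (0:ℝ) < bb := lt_trans (by norm_num) bb_gt_two
  have key : ∀ k : ℕ, |D 0| ≤ 8 * (2 / bb) ^ k := by
    intro k
    have h1 : |D 0| * bb ^ k = |D k| := by
      rw [D_eq k, abs_mul, abs_of_pos (pow_pos hb k)]
    have h2 := D_bound k
    have h3 : (0:ℝ) < bb ^ k := pow_pos hb k
    have h4 : |D 0| ≤ 8 * 2 ^ k / bb ^ k := by
      rw [le_div_iff₀ h3]
      calc |D 0| * bb ^ k = |D k| := h1
        _ ≤ 8 * 2 ^ k := h2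
    calc |D 0| ≤ 8 * 2 ^ k / bb ^ k := h4
      _ = 8 * (2 / bb) ^ k := by rw [div_pow]; ring
  have htend : Filter.Tendsto (fun k : ℕ => 8 * (2 / bb) ^ k) Filter.atTop (nhds 0) := by
    have : Filter.Tendsto (fun k : ℕ => (2 / bb) ^ k) Filter.atTop (nhds 0) := by
      apply tendsto_pow_atTop_nhds_zero_of_lt_one
      · positivity
      · rw [div_lt_one hb]; exact bb_gt_two
    simpa using this.const_mul 8
  have : |D 0| ≤ 0 :=
    le_of_tendsto_of_tendsto' tendsto_const_nhds htend key
  have := abs_nonneg (D 0)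
  have habs : |D 0| = 0 := le_antisymm ‹|D 0| ≤ 0› ‹0 ≤ |D 0|›
  exact abs_eq_zero.mp habs

lemma T_succ (k : ℕ) : T (k + 1) = aa * T k := by
  have h := D_eq k
  rw [D_zero] at h
  unfold D at h
  simp at h
  linarith

lemma T_zero : T 0 = 3 / Real.sqrt 5 := by
  have h1 := T_central
  have h2 : T 1 = aa * T 0 := by simpa using T_succ 0
  have h5 : Real.sqrt 5 ≠ 0 := by positivity
  have h9 : 9 - 2 * aa = 3 * Real.sqrt 5 := by unfold aa; ring
  have key : T 0 * (3 * Real.sqrt 5) = 9 := by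
    linear_combination (-(T 0)) * h9 + 2 * h2 - h1
  rw [eq_div_iff h5]
  linear_combination key / 3

lemma T_formula (k : ℕ) : T k = (3 / Real.sqrt 5) * aa ^ k := by
  induction k with
  | zero => simpa using T_zero
  | succ n ih => rw [T_succ, ih, pow_succ]; ring

lemma phi_pos : 0 < (1 + Real.sqrt 5) / 2 := by positivity

lemma aa_mul_phi_sq : aa * ((1 + Real.sqrt 5) / 2) ^ 2 = 3 := by
  unfold aa
  have h5 := sqrt5_sq
  nlinarith [Real.sqrt_nonneg 5]

/-- Example 4.7: the ladder exit probability at odd heights,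
`p(2r+1) = Σ_n C(2(n+r)+1, n) / 3^{2(n+r)+2} = 1/(φ^{4r+2} √5)`. -/
theorem ladder_exit_odd (r : ℕ) :
    ∑' n : ℕ, ((2 * (n + r) + 1).choose n : ℝ) / 3 ^ (2 * (n + r) + 2) =
      1 / (((1 + Real.sqrt 5) / 2) ^ (4 * r + 2) * Real.sqrt 5) := by
  set φ := (1 + Real.sqrt 5) / 2 with hφ
  have hterm : ∀ n : ℕ, ((2 * (n + r) + 1).choose n : ℝ) / 3 ^ (2 * (n + r) + 2)
      = (((2 * n + (2 * r + 1)).choose n : ℝ) / 9 ^ n) / 9 ^ (r + 1) := by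
    intro n
    have e1 : 2 * (n + r) + 1 = 2 * n + (2 * r + 1) := by ring
    have e2 : (3:ℝ) ^ (2 * (n + r) + 2) = 9 ^ n * 9 ^ (r + 1) := by
      rw [show (9:ℝ) = 3 ^ 2 by norm_num, ← pow_mul, ← pow_mul, ← pow_add]
      congr 1
      ring
    rw [e1, e2, div_div]
  have hLHS : ∑' n : ℕ, ((2 * (n + r) + 1).choose n : ℝ) / 3 ^ (2 * (n + r) + 2)
      = T (2 * r + 1) / 9 ^ (r + 1) := by
    rw [tsum_congr hterm, tsum_div_const, T]
  rw [hLHS, T_formula]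
  have h5 : Real.sqrt 5 ≠ 0 := by positivity
  have hφne : φ ≠ 0 := ne_of_gt phi_pos
  rw [eq_div_iff (by positivity)]
  have eφ : φ ^ (4 * r + 2) = (φ ^ 2) ^ (2 * r + 1) := by
    rw [← pow_mul]
    congr 1
    ring
  have e9 : (9:ℝ) ^ (r + 1) = 3 ^ (2 * r + 2) := by
    rw [show (9:ℝ) = 3 ^ 2 by norm_num, ← pow_mul, show 2 * (r + 1) = 2 * r + 2 from by ring]
  rw [eφ, e9]
  calc 3 / Real.sqrt 5 * aa ^ (2 * r + 1) / 3 ^ (2 * r + 2) * ((φ ^ 2) ^ (2 * r + 1) * Real.sqrt 5)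
      = (aa * φ ^ 2) ^ (2 * r + 1) * 3 / 3 ^ (2 * r + 2) * (Real.sqrt 5 / Real.sqrt 5) := by
        rw [mul_pow]; ring
    _ = 3 ^ (2 * r + 1) * 3 / 3 ^ (2 * r + 2) * 1 := by rw [aa_mul_phi_sq, div_self h5]
    _ = 3 ^ (2 * r + 2) / 3 ^ (2 * r + 2) := by rw [← pow_succ]; ring
    _ = 1 := div_self (by positivity)
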